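/- Fix a nonzero real number λ. Let g(t) = −(1−t)^{−1} · log_λ(1−t) ∈ ℝ[[t]]. Then for every integer k ≥ 1, the k-th formal derivative satisfies g^{(k)}(t) = k! · (1−t)^{−(k+1)} · (H_{k,λ} − C(k−λ,k) · log_λ(1−t)), where C(k−λ,k) = (k−λ)(k−1−λ)···(1−λ)/k!. In particular, the constant term of g^{(k)} equals k! · H_{k,λ}. -/

import Mathlib

open Finset PowerSeries

noncomputable section

/-- The generalized binomial coefficient `C(x,k) = x(x-1)⋯(x-k+1)/k!`. -/
def gbinom (x : ℝ) (k : ℕ) : ℝ := (∏ i ∈ Finset.range k, (x - i)) / k.factorial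

/-- The degenerate harmonic numbers `H_{n,λ} = ∑_{k=1}^n (-1)^{k-1} (1/λ) C(λ,k)`,
with `H_{0,λ} = 0`. -/
def dH (lam : ℝ) (n : ℕ) : ℝ :=
  ∑ k ∈ Finset.Icc 1 n, (-1 : ℝ) ^ (k - 1) * (1 / lam) * gbinom lam k

/-- The degenerate logarithm evaluated at `1 - t`: the formal power series
`log_λ(1-t) = ∑_{n≥1} (1/λ) C(λ,n) (-t)^n` in `ℝ[[t]]`. -/
def dlogNeg (lam : ℝ) : PowerSeries ℝ :=
  PowerSeries.mk fun n => if n = 0 then 0 else (-1 : ℝ) ^ n * (1 / lam) * gbinom lam n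

/-- let `g(t) = -(1-t)⁻¹ log_λ(1-t)`. For every `k ≥ 1`, the `k`-th formal
derivative satisfies
`g^{(k)}(t) = k! (1-t)^{-(k+1)} (H_{k,λ} - C(k-λ,k) log_λ(1-t))`, and in particular the
constant term of `g^{(k)}` equals `k! H_{k,λ}`. -/
-- product shift: ∏_{i<k+1}(x-i) = x * ∏_{i<k}((x-1)-i)
lemma prod_shift (x : ℝ) (k : ℕ) :
    ∏ i ∈ range (k+1), (x - i) = x * ∏ i ∈ range k, ((x - 1) - i) := by
  rw [Finset.prod_range_succ']
  have : ∀ i ∈ range k, (x - ((i:ℕ)+1 : ℕ)) = ((x-1) - i) := by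
    intro i _; push_cast; ring
  rw [Finset.prod_congr rfl this]
  push_cast; ring

-- reflected product: ∏_{i<k}((k-λ)-i) = ∏_{j<k}((j+1)-λ)
lemma prod_reflect (lam : ℝ) (k : ℕ) :
    ∏ i ∈ range k, (((k:ℝ) - lam) - i) = ∏ j ∈ range k, ((j:ℝ) + 1 - lam) := by
  rw [← Finset.prod_range_reflect (fun j => ((j:ℝ) + 1 - lam)) k]
  refine Finset.prod_congr rfl fun i hi => ?_
  simp only [Finset.mem_range] at hi
  have h1 : (1:ℕ) ≤ k := Nat.one_le_iff_ne_zero.2 (by omega)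
  have : ((k - 1 - i : ℕ) : ℝ) = (k:ℝ) - 1 - i := by
    have : k - 1 - i = k - (1 + i) := by omega
    rw [this, Nat.cast_sub (by omega)]
    push_cast; ring
  rw [this]; ring

lemma gbinom_shift (lam : ℝ) (k : ℕ) :
    gbinom lam (k+1) * ((k:ℝ)+1) = lam * (∏ i ∈ range k, ((lam - 1) - i)) / k.factorial := by
  unfold gbinom
  rw [prod_shift]
  rw [Nat.factorial_succ]
  have h1 : ((k+1) * k.factorial : ℕ) = ((k:ℝ)+1) * k.factorial := by push_cast; ring
  rw [h1]
  have hk : ((k:ℝ)+1) ≠ 0 := by positivity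
  have hf : (k.factorial : ℝ) ≠ 0 := by exact_mod_cast k.factorial_ne_zero
  field_simp

-- Pascal: gbinom (λ-1) (n+1) = gbinom λ (n+1) - gbinom (λ-1) n
lemma gbinom_pascal (lam : ℝ) (n : ℕ) :
    gbinom (lam - 1) (n+1) = gbinom lam (n+1) - gbinom (lam - 1) n := by
  have hk : ((n:ℝ)+1) ≠ 0 := by positivity
  have hf : (n.factorial : ℝ) ≠ 0 := by exact_mod_cast n.factorial_ne_zero
  have h1 := gbinom_shift lam n
  have h2 : gbinom (lam-1) (n+1) = gbinom (lam-1) n * ((lam-1) - n) / ((n:ℝ)+1) := by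
    unfold gbinom
    rw [Finset.prod_range_succ, Nat.factorial_succ]
    have : ((n+1) * n.factorial : ℕ) = ((n:ℝ)+1) * n.factorial := by push_cast; ring
    rw [this]; field_simp
  have h3 : gbinom (lam-1) n = (∏ i ∈ range n, ((lam - 1) - i)) / n.factorial := rfl
  rw [h2]
  have h4 : gbinom lam (n+1) = lam * (∏ i ∈ range n, ((lam - 1) - i)) / n.factorial / ((n:ℝ)+1) := by
    field_simp at h1 ⊢
    linarith [h1]
  rw [h4, h3]
  field_simp
  ring

-- alternating sum identity
lemma alt_sum (lam : ℝ) (n : ℕ) :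
    ∑ j ∈ range (n+1), (-1:ℝ)^j * gbinom lam j = (-1)^n * gbinom (lam - 1) n := by
  induction n with
  | zero => simp [gbinom]
  | succ n ih =>
    rw [Finset.sum_range_succ, ih, gbinom_pascal lam n]
    ring

-- (n+1)(1/λ) gbinom λ (n+1) = gbinom (λ-1) n
lemma gbinom_ratio (lam : ℝ) (hlam : lam ≠ 0) (n : ℕ) :
    gbinom lam (n+1) * ((n:ℝ)+1) * (1/lam) = gbinom (lam - 1) n := by
  rw [gbinom_shift]
  have h3 : gbinom (lam-1) n = (∏ i ∈ range n, ((lam - 1) - i)) / n.factorial := rfl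
  rw [h3]; field_simp

lemma one_sub_X_inv_eq : ((1 - X : PowerSeries ℝ))⁻¹ = PowerSeries.mk fun _ => (1:ℝ) := by
  have h : constantCoeff (R := ℝ) (1 - X : PowerSeries ℝ) ≠ 0 := by simp
  refine ((PowerSeries.eq_inv_iff_mul_eq_one h).2 ?_).symm
  ext n
  rw [mul_sub, mul_one]
  cases n with
  | zero => simp
  | succ n =>
    rw [map_sub, PowerSeries.coeff_succ_mul_X]
    simp

lemma coeff_A (n : ℕ) : PowerSeries.coeff (R := ℝ) n ((1 - X : PowerSeries ℝ))⁻¹ = 1 := by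
  rw [one_sub_X_inv_eq, PowerSeries.coeff_mk]

lemma dlogNeg_deriv (lam : ℝ) (hlam : lam ≠ 0) :
    derivativeFun (dlogNeg lam) =
      -((1 - X : PowerSeries ℝ)⁻¹ * (PowerSeries.C (R := ℝ) lam * dlogNeg lam + 1)) := by
  ext n
  change coeff n (d⁄dX ℝ (dlogNeg lam)) = _
  rw [coeff_derivativeFun]
  rw [map_neg, PowerSeries.coeff_mul]
  rw [Finset.Nat.sum_antidiagonal_eq_sum_range_succ_mk]
  have hco : ∀ j : ℕ, PowerSeries.coeff (R := ℝ) j (PowerSeries.C (R := ℝ) lam * dlogNeg lam + 1)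
      = (-1:ℝ)^j * gbinom lam j := by
    intro j
    rw [map_add, PowerSeries.coeff_C_mul]
    cases j with
    | zero => simp [dlogNeg, gbinom]
    | succ j =>
      rw [PowerSeries.coeff_one, if_neg (by omega)]
      simp only [dlogNeg, PowerSeries.coeff_mk, if_neg (Nat.succ_ne_zero j), add_zero]
      field_simp
  have hsum : ∀ i ∈ range (n+1),
      PowerSeries.coeff (R := ℝ) i ((1 - X : PowerSeries ℝ))⁻¹ *
        PowerSeries.coeff (R := ℝ) (n - i) (PowerSeries.C (R := ℝ) lam * dlogNeg lam + 1)
      = (-1:ℝ)^(n-i) * gbinom lam (n-i) := by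
    intro i _
    rw [coeff_A, hco, one_mul]
  rw [Finset.sum_congr rfl hsum]
  have hr := Finset.sum_range_reflect (fun j => (-1:ℝ)^j * gbinom lam j) (n+1)
  simp only [Nat.succ_sub_one] at hr
  rw [hr, alt_sum lam n]
  simp only [dlogNeg, PowerSeries.coeff_mk, if_neg (Nat.succ_ne_zero n)]
  push_cast
  linear_combination ((-1:ℝ)^(n+1)) * (gbinom_ratio lam hlam n)

lemma Qk_eq (lam : ℝ) (k : ℕ) :
    (∏ i ∈ range k, ((i:ℝ) + 1 - lam)) = (-1:ℝ)^k * ∏ i ∈ range k, ((lam - 1) - i) := by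
  induction k with
  | zero => simp
  | succ k ih => rw [Finset.prod_range_succ, Finset.prod_range_succ, ih, pow_succ]; ring

lemma gbinom_Q (lam : ℝ) (k : ℕ) :
    gbinom ((k:ℝ) - lam) k = (∏ j ∈ range k, ((j:ℝ) + 1 - lam)) / k.factorial := by
  unfold gbinom; rw [prod_reflect]

lemma gbinom_flip (lam : ℝ) (k : ℕ) :
    gbinom ((k:ℝ) - lam) k = (-1:ℝ)^k * gbinom (lam - 1) k := by
  rw [gbinom_Q, Qk_eq]
  unfold gbinom
  ring

lemma dH_expand (lam : ℝ) (k : ℕ) :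
    dH lam (k+1) = dH lam k + (-1:ℝ)^k * (1/lam) * gbinom lam (k+1) := by
  unfold dH
  rw [Finset.sum_Icc_succ_top (by omega : 1 ≤ k+1)]
  simp

lemma key_dH (lam : ℝ) (hlam : lam ≠ 0) (k : ℕ) :
    dH lam (k+1) * ((k:ℝ)+1) = dH lam k * ((k:ℝ)+1) + gbinom ((k:ℝ) - lam) k := by
  rw [dH_expand]
  linear_combination ((-1:ℝ)^k) * gbinom_ratio lam hlam k - gbinom_flip lam k

lemma key_B (lam : ℝ) (k : ℕ) :
    gbinom ((↑(k+1):ℝ) - lam) (k+1) * ((k:ℝ)+1) = gbinom ((k:ℝ) - lam) k * (((k:ℝ)+1) - lam) := by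
  have h1 : ((↑(k+1):ℝ)) = ((k+1:ℕ):ℝ) := rfl
  rw [gbinom_Q, gbinom_Q]
  rw [Finset.prod_range_succ, Nat.factorial_succ]
  have hk : ((k:ℝ)+1) ≠ 0 := by positivity
  have hf : (k.factorial : ℝ) ≠ 0 := by exact_mod_cast k.factorial_ne_zero
  push_cast
  field_simp

lemma derivativeFun_sub (f g : PowerSeries ℝ) :
    derivativeFun (f - g) = derivativeFun f - derivativeFun g := by
  ext n
  exact congrArg (coeff n) ((derivative ℝ).map_sub f g)

lemma derivA : derivativeFun ((1 - X : PowerSeries ℝ))⁻¹ = ((1 - X : PowerSeries ℝ))⁻¹ ^ 2 := by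
  have h1 : (d⁄dX ℝ) ((1 - X : PowerSeries ℝ))⁻¹
      = -((1 - X : PowerSeries ℝ))⁻¹ ^ 2 * (d⁄dX ℝ) (1 - X : PowerSeries ℝ) :=
    PowerSeries.derivative_inv' (1 - X)
  have h2 : (d⁄dX ℝ) (1 - X : PowerSeries ℝ) = -1 := by
    rw [map_sub, PowerSeries.derivative_X, Derivation.map_one_eq_zero]
    ring
  rw [h2] at h1
  have h3 : (d⁄dX ℝ) ((1 - X : PowerSeries ℝ))⁻¹
      = derivativeFun ((1 - X : PowerSeries ℝ))⁻¹ := rfl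
  rw [h3] at h1
  rw [h1]; ring

lemma derivApow (n : ℕ) :
    derivativeFun (((1 - X : PowerSeries ℝ))⁻¹ ^ (n+1))
      = PowerSeries.C (R := ℝ) ((n:ℝ)+1) * ((1 - X : PowerSeries ℝ))⁻¹ ^ (n+2) := by
  induction n with
  | zero => simpa [pow_one] using derivA
  | succ n ih =>
    have : ((1 - X : PowerSeries ℝ))⁻¹ ^ (n+2)
        = ((1 - X : PowerSeries ℝ))⁻¹ ^ (n+1) * ((1 - X : PowerSeries ℝ))⁻¹ := by ring
    rw [this, derivativeFun_mul, smul_eq_mul, smul_eq_mul, derivA, ih]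
    have hc : PowerSeries.C (R := ℝ) ((↑(n+1):ℝ)+1) = PowerSeries.C (R := ℝ) ((n:ℝ)+1) + 1 := by
      push_cast
      rw [map_add, map_one]
    rw [hc]
    ring

lemma main_formula (lam : ℝ) (hlam : lam ≠ 0) (k : ℕ) :
    (derivativeFun (R := ℝ))^[k] (-((1 - PowerSeries.X : PowerSeries ℝ)⁻¹ * dlogNeg lam)) =
      (k.factorial : ℝ) •
        (((1 - PowerSeries.X : PowerSeries ℝ)⁻¹) ^ (k + 1) *
          (PowerSeries.C (R := ℝ) (dH lam k) -
            PowerSeries.C (R := ℝ) (gbinom ((k : ℝ) - lam) k) * dlogNeg lam)) := by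
  induction k with
  | zero =>
    have h0 : dH lam 0 = 0 := by unfold dH; simp
    have h1 : gbinom (-lam) 0 = 1 := by unfold gbinom; simp
    simp only [Function.iterate_zero, id_eq, Nat.factorial_zero, Nat.cast_one, one_smul,
      pow_one, Nat.cast_zero, zero_sub, h0, h1, map_zero, map_one]
    ring
  | succ k ih =>
    rw [Function.iterate_succ_apply', ih]
    rw [derivativeFun_smul, derivativeFun_mul, derivativeFun_sub, (show ∀ r : ℝ, derivativeFun (C r) = 0 from fun r => derivativeFun_C (r := r)),
      derivativeFun_mul, (show ∀ r : ℝ, derivativeFun (C r) = 0 from fun r => derivativeFun_C (r := r)), derivApow, dlogNeg_deriv lam hlam]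
    have hf : (k.factorial : ℝ) ≠ 0 := by exact_mod_cast k.factorial_ne_zero
    have h1 : (((k+1).factorial : ℝ)) * dH lam (k+1)
        = (k.factorial : ℝ) * (((k:ℝ)+1) * dH lam k + gbinom ((k:ℝ) - lam) k) := by
      have h := key_dH lam hlam k
      rw [Nat.factorial_succ]
      push_cast
      linear_combination (k.factorial : ℝ) * h
    have h2 : (((k+1).factorial : ℝ)) * gbinom ((↑(k+1):ℝ) - lam) (k+1)
        = (k.factorial : ℝ) * ((((k:ℝ)+1) - lam) * gbinom ((k:ℝ) - lam) k) := by
      have h := key_B lam k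
      rw [Nat.factorial_succ]
      push_cast at h ⊢
      linear_combination (k.factorial : ℝ) * h
    have hC1 := congrArg (PowerSeries.C (R := ℝ)) h1
    have hC2 := congrArg (PowerSeries.C (R := ℝ)) h2
    simp only [smul_eq_C_mul, smul_eq_mul]
    simp only [Nat.cast_add, Nat.cast_one, map_mul, map_add, map_sub, map_one] at hC1 hC2 ⊢
    linear_combination (-(1 - PowerSeries.X : PowerSeries ℝ)⁻¹ ^ (k+2)) * hC1
      + ((1 - PowerSeries.X : PowerSeries ℝ)⁻¹ ^ (k+2) * dlogNeg lam) * hC2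

theorem statement_13 (lam : ℝ) (hlam : lam ≠ 0)
    (g : PowerSeries ℝ)
    (hg : g = -((1 - PowerSeries.X : PowerSeries ℝ)⁻¹ * dlogNeg lam))
    (k : ℕ) (hk : 1 ≤ k) :
    (derivativeFun (R := ℝ))^[k] g =
      (k.factorial : ℝ) •
        (((1 - PowerSeries.X : PowerSeries ℝ)⁻¹) ^ (k + 1) *
          (PowerSeries.C (R := ℝ) (dH lam k) -
            PowerSeries.C (R := ℝ) (gbinom ((k : ℝ) - lam) k) * dlogNeg lam)) ∧
    PowerSeries.constantCoeff (R := ℝ) ((derivativeFun (R := ℝ))^[k] g) =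
      k.factorial * dH lam k := by
  subst hg
  refine ⟨main_formula lam hlam k, ?_⟩
  rw [main_formula lam hlam k, smul_eq_C_mul, map_mul, map_mul, map_pow, map_sub, map_mul,
    one_sub_X_inv_eq]
  simp [dlogNeg, PowerSeries.constantCoeff_mk]
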